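/- For ν ≥ 1, the series F(s,ν) = Σ_{n=1}^∞ (2n+1) μ_n^{-2s} log((1 + 1/(2μ_n))/(1 − 1/(2μ_n))), where μ_n = √(ν² n(n+1) + 1/4), converges absolutely for Re(s) > 1/2 and defines a holomorphic function there; moreover each summand satisfies log((2μ_n+1)/(2μ_n−1)) = Σ_{k=0}^∞ 2/((2k+1)(2μ_n)^{2k+1}). -/

import Mathlib

open Complex

/-- For `ν ≥ 1` and `μ_n = √(ν² n(n+1) + 1/4)` (`n ≥ 1`), the series
`F(s,ν) = Σ_{n≥1} (2n+1) μ_n^{-2s} log((1 + 1/(2μ_n))/(1 - 1/(2μ_n)))` converges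
absolutely for `Re s > 1/2` and is holomorphic there; each summand satisfies
`log((2μ_n+1)/(2μ_n-1)) = Σ_{k≥0} 2/((2k+1)(2μ_n)^{2k+1})`. -/
theorem F_series_convergence (ν : ℝ) (hν : 1 ≤ ν) (μ : ℕ → ℝ)
    (hμ : ∀ n : ℕ, μ n = Real.sqrt (ν^2 * (n+1) * (n+2) + 1/4)) :
    (∀ s : ℂ, 1/2 < s.re → Summable (fun n : ℕ =>
      ‖(2*((n:ℂ)+1)+1) * ((μ n : ℂ)) ^ (-2*s) *
        ((Real.log ((1 + 1/(2*μ n))/(1 - 1/(2*μ n))) : ℝ) : ℂ)‖)) ∧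
    DifferentiableOn ℂ (fun s : ℂ => ∑' n : ℕ,
      (2*((n:ℂ)+1)+1) * ((μ n : ℂ)) ^ (-2*s) *
        ((Real.log ((1 + 1/(2*μ n))/(1 - 1/(2*μ n))) : ℝ) : ℂ))
      {s : ℂ | 1/2 < s.re} ∧
    (∀ n : ℕ, Real.log ((2*μ n + 1)/(2*μ n - 1)) =
      ∑' k : ℕ, 2/((2*(k:ℝ)+1) * (2*μ n)^(2*k+1))) := by
  have hμge : ∀ n : ℕ, (n:ℝ) + 1 ≤ μ n := by
    intro n
    rw [hμ n, Real.le_sqrt (by positivity) (by positivity)]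
    have hn : (0:ℝ) ≤ (n:ℝ) := n.cast_nonneg
    nlinarith [sq_nonneg (ν-1), mul_nonneg (mul_nonneg (by nlinarith : (0:ℝ) ≤ ν^2 - 1) (by linarith : (0:ℝ) ≤ (n:ℝ)+1)) (by linarith : (0:ℝ) ≤ (n:ℝ)+2)]
  have hμ32 : ∀ n : ℕ, (3/2 : ℝ) ≤ μ n := by
    intro n
    rw [hμ n, Real.le_sqrt (by positivity) (by positivity)]
    have hn : (0:ℝ) ≤ (n:ℝ) := n.cast_nonneg
    nlinarith [sq_nonneg (ν-1), mul_nonneg (mul_nonneg (by nlinarith : (0:ℝ) ≤ ν^2 - 1) (by linarith : (0:ℝ) ≤ (n:ℝ)+1)) (by linarith : (0:ℝ) ≤ (n:ℝ)+2)]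
  have hμpos : ∀ n : ℕ, 0 < μ n := fun n => lt_of_lt_of_le (by norm_num) (hμ32 n)
  have hx3 : ∀ n : ℕ, 1/(2*μ n) ≤ 1/3 := by
    intro n
    rw [div_le_div_iff₀ (by linarith [hμpos n]) (by norm_num)]
    linarith [hμ32 n]
  have hxpos : ∀ n : ℕ, 0 < 1/(2*μ n) := fun n =>
    div_pos one_pos (by linarith [hμpos n])
  have hL0 : ∀ n : ℕ, 0 ≤ Real.log ((1 + 1/(2*μ n))/(1 - 1/(2*μ n))) := by
    intro n
    apply Real.log_nonneg
    rw [le_div_iff₀ (by linarith [hx3 n])]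
    linarith [hxpos n]
  have hLle : ∀ n : ℕ, Real.log ((1 + 1/(2*μ n))/(1 - 1/(2*μ n))) ≤ 3/(2*μ n) := by
    intro n
    have hx := hx3 n
    have hx0 := hxpos n
    have h1 : (0:ℝ) < (1 + 1/(2*μ n))/(1 - 1/(2*μ n)) := by
      apply div_pos <;> linarith
    calc Real.log ((1 + 1/(2*μ n))/(1 - 1/(2*μ n)))
        ≤ (1 + 1/(2*μ n))/(1 - 1/(2*μ n)) - 1 := Real.log_le_sub_one_of_pos h1
      _ ≤ 3/(2*μ n) := by
          have h2 : (1/(2*μ n)) * (2*μ n) = 1 :=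
            one_div_mul_cancel (ne_of_gt (by linarith [hμpos n]))
          rw [div_sub_one (by linarith), div_le_div_iff₀ (by linarith) (by linarith [hμpos n])]
          nlinarith [hμpos n, hx3 n, h2]
  -- uniform norm bound
  have hnorm : ∀ (σ₀ : ℝ) (n : ℕ) (s : ℂ), 0 ≤ σ₀ → σ₀ ≤ s.re →
      ‖(2*((n:ℂ)+1)+1) * ((μ n : ℂ)) ^ (-2*s) *
        ((Real.log ((1 + 1/(2*μ n))/(1 - 1/(2*μ n))) : ℝ) : ℂ)‖ ≤
      (9/2) * ((n:ℝ)+1) ^ (-(2*σ₀)) := by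
    intro σ₀ n s hσ hs
    have h1 : (2*((n:ℂ)+1)+1) = ((2*(n:ℝ)+3 : ℝ) : ℂ) := by push_cast; ring
    rw [h1, norm_mul, norm_mul, Complex.norm_real, Complex.norm_real,
      Complex.norm_cpow_eq_rpow_re_of_pos (hμpos n)]
    have hre : (-2*s).re = -(2*s.re) := by simp
    rw [hre, Real.norm_eq_abs, Real.norm_eq_abs,
      _root_.abs_of_nonneg (by positivity : (0:ℝ) ≤ 2*(n:ℝ)+3),
      _root_.abs_of_nonneg (hL0 n)]
    have hb1 : μ n ^ (-(2*s.re)) ≤ ((n:ℝ)+1) ^ (-(2*σ₀)) :=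
      calc μ n ^ (-(2*s.re)) ≤ ((n:ℝ)+1) ^ (-(2*s.re)) :=
            Real.rpow_le_rpow_of_nonpos (by positivity) (hμge n) (by linarith)
        _ ≤ ((n:ℝ)+1) ^ (-(2*σ₀)) :=
            Real.rpow_le_rpow_of_exponent_le (by linarith [n.cast_nonneg (α := ℝ)])
              (by linarith)
    have hb2 : Real.log ((1 + 1/(2*μ n))/(1 - 1/(2*μ n))) ≤ 3/(2*((n:ℝ)+1)) := by
      refine le_trans (hLle n) ?_
      rw [div_le_div_iff₀ (by linarith [hμpos n]) (by positivity)]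
      nlinarith [hμge n]
    calc (2*(n:ℝ)+3) * μ n ^ (-(2*s.re)) * Real.log ((1 + 1/(2*μ n))/(1 - 1/(2*μ n)))
        ≤ (3*((n:ℝ)+1)) * (((n:ℝ)+1) ^ (-(2*σ₀))) * (3/(2*((n:ℝ)+1))) := by
          apply mul_le_mul _ hb2 (hL0 n) (by positivity)
          apply mul_le_mul (by linarith) hb1 (Real.rpow_nonneg (hμpos n).le _)
            (by positivity)
      _ = (9/2) * ((n:ℝ)+1) ^ (-(2*σ₀)) := by
          have h : ((n:ℝ)+1) ≠ 0 := by positivity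
          field_simp
          ring
  have hsummable : ∀ p : ℝ, 1 < p → Summable (fun n : ℕ => (9/2) * ((n:ℝ)+1) ^ (-p)) := by
    intro p hp
    apply Summable.mul_left
    have h := (Real.summable_nat_rpow (p := -p)).mpr (by linarith)
    have h2 := h.comp_injective (add_left_injective 1)
    refine h2.congr fun n => ?_
    simp [Function.comp]
  refine ⟨?_, ?_, ?_⟩
  · -- summability
    intro s hs
    apply Summable.of_nonneg_of_le (fun n => norm_nonneg _)
      (fun n => hnorm s.re n s (by linarith) le_rfl)
    exact hsummable (2*s.re) (by linarith)
  · -- differentiability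
    intro s hs
    simp only [Set.mem_setOf_eq] at hs
    set σ₀ : ℝ := (1/2 + s.re)/2 with hσ₀
    have hσ1 : 1/2 < σ₀ := by simp only [hσ₀]; linarith
    have hσ2 : σ₀ < s.re := by simp only [hσ₀]; linarith
    have hopen : IsOpen {w : ℂ | σ₀ < w.re} := isOpen_lt continuous_const Complex.continuous_re
    have hdiff : DifferentiableOn ℂ (fun w : ℂ => ∑' n : ℕ,
        (2*((n:ℂ)+1)+1) * ((μ n : ℂ)) ^ (-2*w) *
          ((Real.log ((1 + 1/(2*μ n))/(1 - 1/(2*μ n))) : ℝ) : ℂ)) {w : ℂ | σ₀ < w.re} := by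
      apply differentiableOn_tsum_of_summable_norm (hsummable (2*σ₀) (by linarith))
      · intro n
        apply Differentiable.differentiableOn
        exact ((differentiable_const _).mul
          ((differentiable_id.const_mul _).const_cpow
            (Or.inl (by exact_mod_cast (hμpos n).ne')))).mul (differentiable_const _)
      · exact hopen
      · intro n w hw
        exact hnorm σ₀ n w (by linarith) (le_of_lt hw)
    exact ((hdiff.differentiableAt (hopen.mem_nhds hσ2)).differentiableWithinAt)
  · -- series expansion of the log
    intro n
    set x : ℝ := 1/(2*μ n) with hxdef
    have hx0 : 0 < x := hxpos n
    have hx : x ≤ 1/3 := hx3 n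
    have habs : |x| < 1 := by rw [abs_of_pos hx0]; linarith
    have hsum := Real.hasSum_log_sub_log_of_abs_lt_one habs
    have hμne : 2*μ n ≠ 0 := ne_of_gt (by linarith [hμpos n])
    have heq : (fun k : ℕ => (2:ℝ) * (1/(2*(k:ℝ)+1)) * x ^ (2*k+1)) =
        fun k : ℕ => 2/((2*(k:ℝ)+1) * (2*μ n)^(2*k+1)) := by
      funext k
      rw [hxdef, div_pow, one_pow]
      have hk : (2*(k:ℝ)+1) ≠ 0 := by positivity
      have hpow : ((2*μ n)^(2*k+1)) ≠ 0 := pow_ne_zero _ hμne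
      field_simp
    have hratio : (1 + x)/(1 - x) = (2*μ n + 1)/(2*μ n - 1) := by
      rw [hxdef]
      rw [div_eq_div_iff (by linarith) (by linarith [hμ32 n])]
      have hμn0 : μ n ≠ 0 := (hμpos n).ne'
      field_simp
      try ring
    have hlog : Real.log (1 + x) - Real.log (1 - x) =
        Real.log ((2*μ n + 1)/(2*μ n - 1)) := by
      rw [← Real.log_div (by linarith) (by linarith), hratio]
    rw [hlog] at hsum
    rw [heq] at hsum
    exact hsum.tsum_eq.symm
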